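/- Let ρ be a density matrix on ℂ^d⊗ℂ^d, R a positive semidefinite source-operator of type T₁₂₂ for ρ, and σ_R = tr^{(1)}[R]. If a Hermitian matrix W on ℂ^d with operator norm at most 1 satisfies the Bell perfect correlation/anticorrelation restriction tr[ρ(W⊗W)] = ε with ε ∈ {+1, −1}, then for every Hermitian matrix W̃ on ℂ^d with operator norm at most 1, tr[σ_R(W⊗W̃)] = ε·tr[ρ(W⊗W̃)]. -/

import Mathlib

open Matrix
open scoped Kronecker ComplexOrder

namespace BellPaper

variable {α β γ : Type*} [Fintype α] [Fintype β] [Fintype γ]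

/-- Partial trace over the first factor of a threefold tensor product. -/
noncomputable def ptr1 (T : Matrix ((α × β) × γ) ((α × β) × γ) ℂ) :
    Matrix (β × γ) (β × γ) ℂ :=
  fun p q => ∑ i : α, T ((i, p.1), p.2) ((i, q.1), q.2)

/-- Partial trace over the second factor of a threefold tensor product. -/
noncomputable def ptr2 (T : Matrix ((α × β) × γ) ((α × β) × γ) ℂ) :
    Matrix (α × γ) (α × γ) ℂ :=
  fun p q => ∑ j : β, T ((p.1, j), p.2) ((q.1, j), q.2)

/-- Partial trace over the third factor of a threefold tensor product. -/
noncomputable def ptr3 (T : Matrix ((α × β) × γ) ((α × β) × γ) ℂ) :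
    Matrix (α × β) (α × β) ℂ :=
  fun p q => ∑ k : γ, T (p, k) (q, k)

/-- Partial trace over the second factor of a twofold tensor product. -/
noncomputable def ptrB (M : Matrix (α × β) (α × β) ℂ) : Matrix α α ℂ :=
  fun i i' => ∑ j : β, M (i, j) (i', j)

/-- A density matrix: positive semidefinite with unit trace. -/
def IsDensityMatrix {n : Type*} [Fintype n] (ρ : Matrix n n ℂ) : Prop :=
  ρ.PosSemidef ∧ ρ.trace = 1

/-- Source-operator of type `T₁₂₂` for a state on ℂ^{d₁}⊗ℂ^{d₂}. -/
def IsSource122 {d₁ d₂ : ℕ} (ρ : Matrix (Fin d₁ × Fin d₂) (Fin d₁ × Fin d₂) ℂ)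
    (T : Matrix ((Fin d₁ × Fin d₂) × Fin d₂) ((Fin d₁ × Fin d₂) × Fin d₂) ℂ) : Prop :=
  T.IsHermitian ∧ ptr2 T = ρ ∧ ptr3 T = ρ

/-- Source-operator of type `T₁₁₂` for a state on ℂ^{d₁}⊗ℂ^{d₂}. -/
def IsSource112 {d₁ d₂ : ℕ} (ρ : Matrix (Fin d₁ × Fin d₂) (Fin d₁ × Fin d₂) ℂ)
    (S : Matrix ((Fin d₁ × Fin d₁) × Fin d₂) ((Fin d₁ × Fin d₁) × Fin d₂) ℂ) : Prop :=
  S.IsHermitian ∧ ptr1 S = ρ ∧ ptr2 S = ρ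

/-- A DSO state: a density matrix admitting a positive semidefinite source-operator. -/
def IsDSO {d₁ d₂ : ℕ} (ρ : Matrix (Fin d₁ × Fin d₂) (Fin d₁ × Fin d₂) ℂ) : Prop :=
  IsDensityMatrix ρ ∧
    ((∃ T, T.PosSemidef ∧ IsSource122 ρ T) ∨ (∃ S, S.PosSemidef ∧ IsSource112 ρ S))

/-- A Bell class state: a density matrix admitting a density source-operator with the
special dilation property (all three partial traces equal the state). -/
def IsBellClass {d : ℕ} (ρ : Matrix (Fin d × Fin d) (Fin d × Fin d) ℂ) : Prop :=
  IsDensityMatrix ρ ∧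
    ∃ T : Matrix ((Fin d × Fin d) × Fin d) ((Fin d × Fin d) × Fin d) ℂ,
      T.PosSemidef ∧ ptr1 T = ρ ∧ ptr2 T = ρ ∧ ptr3 T = ρ

/-- The operator (spectral) norm of a matrix acting on a Euclidean space. -/
noncomputable def opNorm {n : Type*} [Fintype n] [DecidableEq n] (W : Matrix n n ℂ) : ℝ :=
  ‖Matrix.toEuclideanCLM (𝕜 := ℂ) W‖

/-- The swap (permutation) operator `V_d` on ℂ^d ⊗ ℂ^d. -/
noncomputable def swapMat (d : ℕ) : Matrix (Fin d × Fin d) (Fin d × Fin d) ℂ :=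
  fun p q => if p.1 = q.2 ∧ p.2 = q.1 then 1 else 0

/-- The Werner state on ℂ^d ⊗ ℂ^d. -/
noncomputable def werner (d : ℕ) : Matrix (Fin d × Fin d) (Fin d × Fin d) ℂ :=
  (((d : ℂ) + 1) / (d : ℂ) ^ 3) • (1 : Matrix (Fin d × Fin d) (Fin d × Fin d) ℂ)
    - ((d : ℂ) ^ 2)⁻¹ • swapMat d

/-- The triple of indices of a point of the threefold product. -/
def triple {d : ℕ} (p : (Fin d × Fin d) × Fin d) : Fin 3 → Fin d := ![p.1.1, p.1.2, p.2]

/-- The unitary permuting the three tensor factors of ℂ^d ⊗ ℂ^d ⊗ ℂ^d according to π. -/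
noncomputable def permMat (d : ℕ) (π : Equiv.Perm (Fin 3)) :
    Matrix ((Fin d × Fin d) × Fin d) ((Fin d × Fin d) × Fin d) ℂ :=
  fun p q => if ∀ i, triple p (π i) = triple q i then 1 else 0

/-- The antisymmetrization projection `Q_d^{(-)}` on ℂ^d ⊗ ℂ^d ⊗ ℂ^d. -/
noncomputable def antisym (d : ℕ) :
    Matrix ((Fin d × Fin d) × Fin d) ((Fin d × Fin d) × Fin d) ℂ :=
  (6 : ℂ)⁻¹ • ∑ π : Equiv.Perm (Fin 3), (((Equiv.Perm.sign π : ℤ) : ℂ)) • permMat d π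

/-- Tensor product of two vectors. -/
def tens {m n : Type*} (u : m → ℂ) (v : n → ℂ) : m × n → ℂ := fun p => u p.1 * v p.2

/-- The rank-one operator |v⟩⟨v|. -/
noncomputable def outer {n : Type*} (v : n → ℂ) : Matrix n n ℂ :=
  Matrix.vecMulVec v (star v)


section Aux

set_option linter.unusedSectionVars false

variable {m n : Type*} [Fintype m] [Fintype n] [DecidableEq m] [DecidableEq n]

open scoped MatrixOrder in
lemma posSemidef_iff_eq_transpose_mul_self {A : Matrix m m ℂ} :
    A.PosSemidef ↔ ∃ B : Matrix m m ℂ, A = Bᴴ * B := by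
  constructor
  · intro hA
    have h0 : 0 ≤ A := hA.nonneg
    have hs : (CFC.sqrt A)ᴴ = CFC.sqrt A := (CFC.sqrt_nonneg A).posSemidef.1
    exact ⟨CFC.sqrt A, by rw [hs, CFC.sqrt_mul_sqrt_self A h0]⟩
  · rintro ⟨B, rfl⟩
    exact posSemidef_conjTranspose_mul_self B

open scoped MatrixOrder in
/-- Square root of a positive semidefinite matrix. -/
noncomputable def _root_.Matrix.PosSemidef.sqrt {A : Matrix m m ℂ} (_ : A.PosSemidef) :
    Matrix m m ℂ := CFC.sqrt A

open scoped MatrixOrder in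
lemma _root_.Matrix.PosSemidef.sqrt_mul_self {A : Matrix m m ℂ} (hA : A.PosSemidef) :
    hA.sqrt * hA.sqrt = A := CFC.sqrt_mul_sqrt_self A hA.nonneg

open scoped MatrixOrder in
lemma _root_.Matrix.PosSemidef.posSemidef_sqrt {A : Matrix m m ℂ} (hA : A.PosSemidef) :
    hA.sqrt.PosSemidef := (CFC.sqrt_nonneg A).posSemidef

lemma kron_conjT' (A : Matrix m m ℂ) (B : Matrix n n ℂ) : (A ⊗ₖ B)ᴴ = Aᴴ ⊗ₖ Bᴴ := by
  ext ⟨i, j⟩ ⟨k, l⟩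
  simp [conjTranspose_apply, kroneckerMap_apply, mul_comm]

lemma kron_herm' {A : Matrix m m ℂ} {B : Matrix n n ℂ} (hA : A.IsHermitian)
    (hB : B.IsHermitian) : (A ⊗ₖ B).IsHermitian := by
  unfold Matrix.IsHermitian
  rw [kron_conjT', hA.eq, hB.eq]

lemma psd_kron' {A : Matrix m m ℂ} {B : Matrix n n ℂ} (hA : A.PosSemidef)
    (hB : B.PosSemidef) : (A ⊗ₖ B).PosSemidef := by
  rw [posSemidef_iff_eq_transpose_mul_self] at *
  obtain ⟨X, rfl⟩ := hA
  obtain ⟨Y, rfl⟩ := hB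
  exact ⟨X ⊗ₖ Y, by rw [kron_conjT', mul_kronecker_mul]⟩

lemma sub_kron' (A B : Matrix m m ℂ) (C : Matrix n n ℂ) :
    (A - B) ⊗ₖ C = A ⊗ₖ C - B ⊗ₖ C := by
  ext ⟨i, j⟩ ⟨k, l⟩
  simp [kroneckerMap_apply, sub_mul]

lemma kron_sub' (A : Matrix m m ℂ) (B C : Matrix n n ℂ) :
    A ⊗ₖ (B - C) = A ⊗ₖ B - A ⊗ₖ C := by
  ext ⟨i, j⟩ ⟨k, l⟩
  simp [kroneckerMap_apply, mul_sub]

lemma trace_conjT_mul_self_nonneg' (A : Matrix m n ℂ) : 0 ≤ (Aᴴ * A).trace := by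
  rw [Matrix.trace]
  apply Finset.sum_nonneg
  intro j _
  simp only [diag_apply, mul_apply, conjTranspose_apply]
  exact Finset.sum_nonneg fun i _ => star_mul_self_nonneg _

lemma trace_conjT_mul_self_eq_zero' {A : Matrix m n ℂ} (h : (Aᴴ * A).trace = 0) : A = 0 := by
  ext i j
  have hterm : ∀ j : n, (0:ℂ) ≤ (Aᴴ * A) j j := fun j => by
    simp only [mul_apply, conjTranspose_apply]
    exact Finset.sum_nonneg fun i _ => star_mul_self_nonneg _
  have hdiag : (Aᴴ * A) j j = 0 :=
    (Finset.sum_eq_zero_iff_of_nonneg (fun k _ => hterm k)).mp h j (Finset.mem_univ j)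
  rw [mul_apply] at hdiag
  have h0 : star (A i j) * A i j = 0 := by
    have := (Finset.sum_eq_zero_iff_of_nonneg
      (fun k _ => star_mul_self_nonneg (A k j))).mp (by simpa [conjTranspose_apply] using hdiag) i
      (Finset.mem_univ i)
    simpa [conjTranspose_apply] using this
  rcases mul_eq_zero.mp h0 with h | h
  · simpa using congrArg star h
  · simpa using h

lemma trace_cycle_key' (X Y : Matrix m m ℂ) :
    ((Y * Xᴴ)ᴴ * (Y * Xᴴ)).trace = (Xᴴ * X * (Yᴴ * Y)).trace := by
  rw [conjTranspose_mul, conjTranspose_conjTranspose,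
    show X * Yᴴ * (Y * Xᴴ) = (X * (Yᴴ * Y)) * Xᴴ by noncomm_ring, trace_mul_comm,
    show Xᴴ * (X * (Yᴴ * Y)) = Xᴴ * X * (Yᴴ * Y) by noncomm_ring]

lemma psd_trace_mul_nonneg' {A B : Matrix m m ℂ} (hA : A.PosSemidef) (hB : B.PosSemidef) :
    0 ≤ (A * B).trace := by
  rw [posSemidef_iff_eq_transpose_mul_self] at hA hB
  obtain ⟨X, rfl⟩ := hA
  obtain ⟨Y, rfl⟩ := hB
  rw [← trace_cycle_key']
  exact trace_conjT_mul_self_nonneg' _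

lemma psd_trace_mul_eq_zero' {A B : Matrix m m ℂ} (hA : A.PosSemidef) (hB : B.PosSemidef)
    (h : (A * B).trace = 0) : A * B = 0 := by
  rw [posSemidef_iff_eq_transpose_mul_self] at hA hB
  obtain ⟨X, rfl⟩ := hA
  obtain ⟨Y, rfl⟩ := hB
  have h3 : Y * Xᴴ = 0 := trace_conjT_mul_self_eq_zero' (by rw [trace_cycle_key']; exact h)
  have h4 : X * Yᴴ = 0 := by
    have := congrArg conjTranspose h3
    simpa [conjTranspose_mul] using this
  calc Xᴴ * X * (Yᴴ * Y) = Xᴴ * (X * Yᴴ) * Y := by noncomm_ring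
    _ = 0 := by rw [h4]; simp

lemma nonneg_of_double' {z : ℂ} (h : 0 ≤ z + z) : 0 ≤ z := by
  rw [Complex.le_def] at h ⊢
  simp only [Complex.add_re, Complex.add_im, Complex.zero_re, Complex.zero_im] at h ⊢
  constructor
  · linarith [h.1]
  · linarith [h.2]

lemma psd_half' {M : Matrix m m ℂ} (hM : M.IsHermitian) (h : (M + M).PosSemidef) :
    M.PosSemidef := by
  refine .of_dotProduct_mulVec_nonneg hM fun x => ?_
  have := h.dotProduct_mulVec_nonneg x
  rw [add_mulVec, dotProduct_add] at this
  exact nonneg_of_double' this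

lemma one_sub_psd' {W : Matrix m m ℂ} (hW : W.IsHermitian)
    (hn : ‖Matrix.toEuclideanCLM (𝕜 := ℂ) W‖ ≤ 1) : (1 - W).PosSemidef := by
  refine .of_dotProduct_mulVec_nonneg ((isHermitian_one).sub hW) fun x => ?_
  set v : EuclideanSpace ℂ m := (WithLp.equiv _ _).symm x with hv
  have hWv : Matrix.toEuclideanCLM (𝕜 := ℂ) W v = (WithLp.equiv _ _).symm (W *ᵥ x) :=
    Matrix.toEuclideanCLM_toLp W x
  have hip : (inner ℂ v ((WithLp.equiv _ _).symm (W *ᵥ x) : EuclideanSpace ℂ m) : ℂ)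
      = star x ⬝ᵥ (W *ᵥ x) := by
    rw [PiLp.inner_apply]
    simp only [WithLp.equiv, Equiv.refl_apply, hv, RCLike.inner_apply]
    simp [dotProduct, mul_comm]
  have hvv : (inner ℂ v v : ℂ) = star x ⬝ᵥ x := by
    rw [PiLp.inner_apply]
    simp only [WithLp.equiv, Equiv.refl_apply, hv, RCLike.inner_apply]
    simp [dotProduct, mul_comm]
  have hsa : star (star x ⬝ᵥ (W *ᵥ x)) = star x ⬝ᵥ (W *ᵥ x) := by
    conv_lhs => rw [star_dotProduct, star_star, star_mulVec]
    rw [← dotProduct_mulVec, hW.eq]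
  have hb : Complex.re (star x ⬝ᵥ (W *ᵥ x)) ≤ Complex.re (star x ⬝ᵥ x) := by
    rw [← hip, ← hvv]
    have h1 : Complex.re (inner ℂ v ((WithLp.equiv _ _).symm (W *ᵥ x) : EuclideanSpace ℂ m))
        ≤ ‖(inner ℂ v ((WithLp.equiv _ _).symm (W *ᵥ x) : EuclideanSpace ℂ m) : ℂ)‖ :=
      Complex.re_le_norm _
    have h2 := norm_inner_le_norm (𝕜 := ℂ) v
      ((WithLp.equiv _ _).symm (W *ᵥ x) : EuclideanSpace ℂ m)
    have h3 : ‖((WithLp.equiv _ _).symm (W *ᵥ x) : EuclideanSpace ℂ m)‖ ≤ ‖v‖ := by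
      rw [← hWv]
      calc ‖Matrix.toEuclideanCLM (𝕜 := ℂ) W v‖ ≤ ‖Matrix.toEuclideanCLM (𝕜 := ℂ) W‖ * ‖v‖ :=
        (Matrix.toEuclideanCLM (𝕜 := ℂ) W).le_opNorm v
      _ ≤ 1 * ‖v‖ := by gcongr
      _ = ‖v‖ := one_mul _
    have h4 : (inner ℂ v v : ℂ).re = ‖v‖ * ‖v‖ := by
      have := inner_self_eq_norm_mul_norm (𝕜 := ℂ) v
      exact this
    calc Complex.re (inner ℂ v ((WithLp.equiv _ _).symm (W *ᵥ x) : EuclideanSpace ℂ m))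
        ≤ ‖v‖ * ‖v‖ := h1.trans (h2.trans (by nlinarith [norm_nonneg v]))
      _ = Complex.re (inner ℂ v v : ℂ) := h4.symm
  rw [sub_mulVec, dotProduct_sub, one_mulVec, Complex.le_def]
  constructor
  · simpa using hb
  · have him : (star x ⬝ᵥ (W *ᵥ x)).im = 0 := by
      have := congrArg Complex.im hsa
      simp at this
      linarith
    have him2 : (star x ⬝ᵥ x).im = 0 := by
      simp only [dotProduct, Complex.im_sum]
      exact Finset.sum_eq_zero fun i _ => by simp [Complex.mul_im]; ring
    simp [him, him2]

lemma psd_one_sub_kron' {P : Matrix m m ℂ} {Q : Matrix n n ℂ}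
    (hP : P.IsHermitian) (hQ : Q.IsHermitian)
    (hP1 : (1 - P).PosSemidef) (hP2 : (1 + P).PosSemidef)
    (hQ1 : (1 - Q).PosSemidef) (hQ2 : (1 + Q).PosSemidef) :
    (1 - P ⊗ₖ Q).PosSemidef := by
  apply psd_half' ((isHermitian_one).sub (kron_herm' hP hQ))
  have key : (1 - P ⊗ₖ Q) + (1 - P ⊗ₖ Q) = (1 - P) ⊗ₖ (1 + Q) + (1 + P) ⊗ₖ (1 - Q) := by
    ext ⟨i, j⟩ ⟨k, l⟩
    simp only [Matrix.add_apply, Matrix.sub_apply, one_apply, kroneckerMap_apply, Prod.mk.injEq]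
    by_cases h1 : i = k <;> by_cases h2 : j = l <;> simp [h1, h2] <;> ring
  rw [key]
  exact (psd_kron' hP1 hQ2).add (psd_kron' hP2 hQ1)

end Aux

section Aux2

set_option linter.unusedSectionVars false

variable {α β γ : Type*} [Fintype α] [Fintype β] [Fintype γ]
variable [DecidableEq α] [DecidableEq β] [DecidableEq γ]

lemma trace_ptr3 (T : Matrix ((α × β) × γ) ((α × β) × γ) ℂ) :
    (ptr3 T).trace = T.trace := by
  simp [Matrix.trace, ptr3, Fintype.sum_prod_type]

lemma trace_ptr3_mul (T : Matrix ((α × β) × γ) ((α × β) × γ) ℂ) (N : Matrix (α × β) (α × β) ℂ) :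
    (ptr3 T * N).trace = (T * (N ⊗ₖ (1 : Matrix γ γ ℂ))).trace := by
  simp only [Matrix.trace, Matrix.diag_apply, Matrix.mul_apply, ptr3, kroneckerMap_apply,
    one_apply, Fintype.sum_prod_type, mul_ite, mul_one, mul_zero, Finset.sum_ite_eq',
    Finset.mem_univ, if_true, Finset.sum_mul]
  refine Finset.sum_congr rfl fun a _ => Finset.sum_congr rfl fun b _ => ?_
  conv_lhs => enter [2, x1]; rw [Finset.sum_comm]
  rw [Finset.sum_comm]

lemma trace_ptr2_mul (T : Matrix ((α × β) × γ) ((α × β) × γ) ℂ)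
    (M : Matrix α α ℂ) (M' : Matrix γ γ ℂ) :
    (ptr2 T * (M ⊗ₖ M')).trace = (T * ((M ⊗ₖ (1 : Matrix β β ℂ)) ⊗ₖ M')).trace := by
  simp only [Matrix.trace, Matrix.diag_apply, Matrix.mul_apply, ptr2, kroneckerMap_apply,
    one_apply, Fintype.sum_prod_type, mul_ite, mul_one, mul_zero, Finset.sum_ite_eq',
    Finset.mem_univ, if_true, Finset.sum_mul]
  conv_rhs => enter [2,x,2,x1,2,x2,2,x3]; rw [Finset.sum_comm]
  simp only [ite_mul, mul_ite, zero_mul, mul_zero, Finset.sum_ite_eq', Finset.mem_univ, if_true]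
  conv_lhs => enter [2,x,2,x1,2,x2]; rw [Finset.sum_comm]
  conv_lhs => enter [2,x,2,x1]; rw [Finset.sum_comm]
  conv_lhs => enter [2,x]; rw [Finset.sum_comm]

lemma trace_ptr1_mul (T : Matrix ((α × β) × γ) ((α × β) × γ) ℂ)
    (M : Matrix β β ℂ) (M' : Matrix γ γ ℂ) :
    (ptr1 T * (M ⊗ₖ M')).trace = (T * (((1 : Matrix α α ℂ) ⊗ₖ M) ⊗ₖ M')).trace := by
  simp only [Matrix.trace, Matrix.diag_apply, Matrix.mul_apply, ptr1, kroneckerMap_apply,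
    one_apply, Fintype.sum_prod_type, mul_ite, mul_one, mul_zero, Finset.sum_ite_eq',
    Finset.mem_univ, if_true, Finset.sum_mul]
  conv_rhs => enter [2,x,2,x1,2,x2]; rw [Finset.sum_comm]
  conv_rhs => enter [2,x,2,x1,2,x2,2,x4]; rw [Finset.sum_comm]
  simp only [ite_mul, mul_ite, zero_mul, mul_zero, one_mul, Finset.sum_ite_eq',
    Finset.mem_univ, if_true]
  conv_lhs => enter [2,x,2,x1,2,x2]; rw [Finset.sum_comm]
  conv_lhs => enter [2,x,2,x1]; rw [Finset.sum_comm]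
  conv_lhs => enter [2,x]; rw [Finset.sum_comm]
  rw [Finset.sum_comm]

end Aux2

set_option maxHeartbeats 2000000 in
/-- Bell's perfect correlation/anticorrelation restriction (44) implies the
sufficient condition (42). -/
theorem bell_restriction_implies_condition {d : ℕ}
    (ρ : Matrix (Fin d × Fin d) (Fin d × Fin d) ℂ) (hρ : IsDensityMatrix ρ)
    (R : Matrix ((Fin d × Fin d) × Fin d) ((Fin d × Fin d) × Fin d) ℂ)
    (hRpos : R.PosSemidef) (hRsrc : IsSource122 ρ R)
    (ε : ℝ) (hε : ε = 1 ∨ ε = -1)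
    (W : Matrix (Fin d) (Fin d) ℂ) (hW : W.IsHermitian) (hnW : opNorm W ≤ 1)
    (hBell : (ρ * (W ⊗ₖ W)).trace = (ε : ℂ))
    (W' : Matrix (Fin d) (Fin d) ℂ) (hW' : W'.IsHermitian) (hnW' : opNorm W' ≤ 1) :
    (ptr1 R * (W ⊗ₖ W')).trace = (ε : ℂ) * (ρ * (W ⊗ₖ W')).trace := by
  classical
  obtain ⟨hRherm, hptr2, hptr3⟩ := hRsrc
  have hεsq : (ε : ℂ) * (ε : ℂ) = 1 := by
    rcases hε with h | h <;> simp [h]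
  have hεnorm : ‖(ε : ℂ)‖ = 1 := by
    rcases hε with h | h <;> simp [h]
  have hnW'' : ‖Matrix.toEuclideanCLM (𝕜 := ℂ) W‖ ≤ 1 := hnW
  have hWW_herm : (W * W).IsHermitian := by
    unfold Matrix.IsHermitian
    rw [conjTranspose_mul, hW.eq]
  have hWW_psd : (W * W).PosSemidef := by
    have := posSemidef_conjTranspose_mul_self W
    rwa [hW.eq] at this
  have hW2 : ((1 : Matrix (Fin d) (Fin d) ℂ) - W * W).PosSemidef := by
    apply one_sub_psd' hWW_herm
    calc ‖Matrix.toEuclideanCLM (𝕜 := ℂ) (W * W)‖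
        = ‖Matrix.toEuclideanCLM (𝕜 := ℂ) W * Matrix.toEuclideanCLM (𝕜 := ℂ) W‖ := by
          rw [_root_.map_mul]
      _ ≤ ‖Matrix.toEuclideanCLM (𝕜 := ℂ) W‖ * ‖Matrix.toEuclideanCLM (𝕜 := ℂ) W‖ :=
          norm_mul_le _ _
      _ ≤ 1 * 1 := mul_le_mul hnW'' hnW'' (norm_nonneg _) zero_le_one
      _ = 1 := one_mul 1
  have hW1m : ((1 : Matrix (Fin d) (Fin d) ℂ) - W).PosSemidef := one_sub_psd' hW hnW''
  have hW1p : ((1 : Matrix (Fin d) (Fin d) ℂ) + W).PosSemidef := by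
    have h0 : ((1 : Matrix (Fin d) (Fin d) ℂ) - (-W)).PosSemidef := by
      apply one_sub_psd' hW.neg
      rw [_root_.map_neg, norm_neg]
      exact hnW''
    rwa [sub_neg_eq_add] at h0
  set V : Matrix (Fin d) (Fin d) ℂ := (ε : ℂ) • W with hVdef
  have hVherm : V.IsHermitian := by
    unfold Matrix.IsHermitian
    rw [hVdef, conjTranspose_smul, hW.eq, Complex.star_def, Complex.conj_ofReal]
  have hnV : ‖Matrix.toEuclideanCLM (𝕜 := ℂ) V‖ ≤ 1 := by
    rcases hε with h | h
    · rw [hVdef, show ((ε : ℂ)) • W = W by rw [h]; norm_num]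
      exact hnW''
    · rw [hVdef, show ((ε : ℂ)) • W = -W by rw [h]; norm_num, _root_.map_neg, norm_neg]
      exact hnW''
  have hV1m : ((1 : Matrix (Fin d) (Fin d) ℂ) - V).PosSemidef := one_sub_psd' hVherm hnV
  have hV1p : ((1 : Matrix (Fin d) (Fin d) ℂ) + V).PosSemidef := by
    have h0 : ((1 : Matrix (Fin d) (Fin d) ℂ) - (-V)).PosSemidef := by
      apply one_sub_psd' hVherm.neg
      rw [_root_.map_neg, norm_neg]
      exact hnV
    rwa [sub_neg_eq_add] at h0
  set A : Matrix ((Fin d × Fin d) × Fin d) ((Fin d × Fin d) × Fin d) ℂ :=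
    (W ⊗ₖ W) ⊗ₖ (1 : Matrix (Fin d) (Fin d) ℂ) with hAdef
  set B : Matrix ((Fin d × Fin d) × Fin d) ((Fin d × Fin d) × Fin d) ℂ :=
    (W ⊗ₖ (1 : Matrix (Fin d) (Fin d) ℂ)) ⊗ₖ W with hBdef
  have htrR : R.trace = 1 := by
    rw [← trace_ptr3 R, hptr3, hρ.2]
  have hRA : (R * A).trace = (ε : ℂ) := by
    rw [hAdef, ← trace_ptr3_mul, hptr3, hBell]
  have hRB : (R * B).trace = (ε : ℂ) := by
    rw [hBdef, ← trace_ptr2_mul, hptr2, hBell]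
  have hsmulA : (ε : ℂ) • A = (V ⊗ₖ W) ⊗ₖ (1 : Matrix (Fin d) (Fin d) ℂ) := by
    rw [hVdef, hAdef, smul_kronecker, smul_kronecker]
  have hsmulB : (ε : ℂ) • B = (V ⊗ₖ (1 : Matrix (Fin d) (Fin d) ℂ)) ⊗ₖ W := by
    rw [hVdef, hBdef, smul_kronecker, smul_kronecker]
  have hDpsd : (1 - (ε : ℂ) • A).PosSemidef := by
    rw [hsmulA,
      show (1 : Matrix ((Fin d × Fin d) × Fin d) ((Fin d × Fin d) × Fin d) ℂ)
          - (V ⊗ₖ W) ⊗ₖ (1 : Matrix (Fin d) (Fin d) ℂ)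
        = ((1 : Matrix (Fin d × Fin d) (Fin d × Fin d) ℂ) - V ⊗ₖ W) ⊗ₖ
            (1 : Matrix (Fin d) (Fin d) ℂ) by rw [sub_kron', one_kronecker_one]]
    exact psd_kron' (psd_one_sub_kron' hVherm hW hV1m hV1p hW1m hW1p) Matrix.PosSemidef.one
  have hEpsd : (1 - (ε : ℂ) • B).PosSemidef := by
    rw [hsmulB]
    have hP1 : ((1 : Matrix (Fin d × Fin d) (Fin d × Fin d) ℂ)
        - V ⊗ₖ (1 : Matrix (Fin d) (Fin d) ℂ)).PosSemidef := by
      rw [show (1 : Matrix (Fin d × Fin d) (Fin d × Fin d) ℂ) - V ⊗ₖ (1 : Matrix (Fin d) (Fin d) ℂ)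
          = ((1 : Matrix (Fin d) (Fin d) ℂ) - V) ⊗ₖ (1 : Matrix (Fin d) (Fin d) ℂ) by
        rw [sub_kron', one_kronecker_one]]
      exact psd_kron' hV1m Matrix.PosSemidef.one
    have hP2 : ((1 : Matrix (Fin d × Fin d) (Fin d × Fin d) ℂ)
        + V ⊗ₖ (1 : Matrix (Fin d) (Fin d) ℂ)).PosSemidef := by
      rw [show (1 : Matrix (Fin d × Fin d) (Fin d × Fin d) ℂ) + V ⊗ₖ (1 : Matrix (Fin d) (Fin d) ℂ)
          = ((1 : Matrix (Fin d) (Fin d) ℂ) + V) ⊗ₖ (1 : Matrix (Fin d) (Fin d) ℂ) by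
        rw [add_kronecker, one_kronecker_one]]
      exact psd_kron' hV1p Matrix.PosSemidef.one
    exact psd_one_sub_kron' (kron_herm' hVherm isHermitian_one) hW hP1 hP2 hW1m hW1p
  -- R is fixed by ε•A and ε•B
  have hRA' : R * A = (ε : ℂ) • R := by
    have h0 : R * (1 - (ε : ℂ) • A) = 0 := by
      apply psd_trace_mul_eq_zero' hRpos hDpsd
      rw [mul_sub, mul_one, mul_smul_comm, trace_sub, trace_smul, htrR, hRA, smul_eq_mul, hεsq,
        sub_self]
    have h1 : R = (ε : ℂ) • (R * A) := by
      have := h0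
      rw [mul_sub, mul_one, mul_smul_comm, sub_eq_zero] at this
      exact this
    calc R * A = ((ε : ℂ) * (ε : ℂ)) • (R * A) := by rw [hεsq, one_smul]
      _ = (ε : ℂ) • ((ε : ℂ) • (R * A)) := by rw [smul_smul]
      _ = (ε : ℂ) • R := by rw [← h1]
  have hRB' : R * B = (ε : ℂ) • R := by
    have h0 : R * (1 - (ε : ℂ) • B) = 0 := by
      apply psd_trace_mul_eq_zero' hRpos hEpsd
      rw [mul_sub, mul_one, mul_smul_comm, trace_sub, trace_smul, htrR, hRB, smul_eq_mul, hεsq,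
        sub_self]
    have h1 : R = (ε : ℂ) • (R * B) := by
      have := h0
      rw [mul_sub, mul_one, mul_smul_comm, sub_eq_zero] at this
      exact this
    calc R * B = ((ε : ℂ) * (ε : ℂ)) • (R * B) := by rw [hεsq, one_smul]
      _ = (ε : ℂ) • ((ε : ℂ) • (R * B)) := by rw [smul_smul]
      _ = (ε : ℂ) • R := by rw [← h1]
  -- trace of R against A*A is 1
  have hAA : A * A = ((W * W) ⊗ₖ (W * W)) ⊗ₖ (1 : Matrix (Fin d) (Fin d) ℂ) := by
    rw [hAdef, ← mul_kronecker_mul, ← mul_kronecker_mul, one_mul]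
  have htrRAA : (R * (A * A)).trace = 1 := by
    rw [← mul_assoc, hRA', smul_mul_assoc, trace_smul, hRA, smul_eq_mul, hεsq]
  -- squeeze: traces against X and Y are 1
  set X : Matrix ((Fin d × Fin d) × Fin d) ((Fin d × Fin d) × Fin d) ℂ :=
    ((W * W) ⊗ₖ (1 : Matrix (Fin d) (Fin d) ℂ)) ⊗ₖ (1 : Matrix (Fin d) (Fin d) ℂ) with hXdef
  set Y : Matrix ((Fin d × Fin d) × Fin d) ((Fin d × Fin d) × Fin d) ℂ :=
    ((1 : Matrix (Fin d) (Fin d) ℂ) ⊗ₖ (W * W)) ⊗ₖ (1 : Matrix (Fin d) (Fin d) ℂ) with hYdef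
  have hsqueeze : ∀ Z : Matrix ((Fin d × Fin d) × Fin d) ((Fin d × Fin d) × Fin d) ℂ,
      (1 - Z).PosSemidef → (Z - A * A).PosSemidef → (R * Z).trace = 1 := by
    intro Z h1 h2
    have hub : 0 ≤ (R * (1 - Z)).trace := psd_trace_mul_nonneg' hRpos h1
    have hlb : 0 ≤ (R * (Z - A * A)).trace := psd_trace_mul_nonneg' hRpos h2
    rw [mul_sub, mul_one, trace_sub, htrR] at hub
    rw [mul_sub, trace_sub, htrRAA] at hlb
    have h3 : (R * Z).trace ≤ 1 := by
      rwa [sub_nonneg] at hub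
    have h4 : 1 ≤ (R * Z).trace := by
      rwa [sub_nonneg] at hlb
    exact le_antisymm h3 h4
  have htrRX : (R * X).trace = 1 := by
    apply hsqueeze
    · rw [hXdef,
        show (1 : Matrix ((Fin d × Fin d) × Fin d) ((Fin d × Fin d) × Fin d) ℂ)
            - ((W * W) ⊗ₖ (1 : Matrix (Fin d) (Fin d) ℂ)) ⊗ₖ (1 : Matrix (Fin d) (Fin d) ℂ)
          = (((1 : Matrix (Fin d) (Fin d) ℂ) - W * W) ⊗ₖ (1 : Matrix (Fin d) (Fin d) ℂ)) ⊗ₖ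
              (1 : Matrix (Fin d) (Fin d) ℂ) by
          rw [sub_kron', sub_kron', one_kronecker_one, one_kronecker_one]]
      exact psd_kron' (psd_kron' hW2 Matrix.PosSemidef.one) Matrix.PosSemidef.one
    · rw [hAA, hXdef,
        show ((W * W) ⊗ₖ (1 : Matrix (Fin d) (Fin d) ℂ)) ⊗ₖ (1 : Matrix (Fin d) (Fin d) ℂ)
            - ((W * W) ⊗ₖ (W * W)) ⊗ₖ (1 : Matrix (Fin d) (Fin d) ℂ)
          = ((W * W) ⊗ₖ ((1 : Matrix (Fin d) (Fin d) ℂ) - W * W)) ⊗ₖ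
              (1 : Matrix (Fin d) (Fin d) ℂ) by
          rw [kron_sub', sub_kron']]
      exact psd_kron' (psd_kron' hWW_psd hW2) Matrix.PosSemidef.one
  have htrRY : (R * Y).trace = 1 := by
    apply hsqueeze
    · rw [hYdef,
        show (1 : Matrix ((Fin d × Fin d) × Fin d) ((Fin d × Fin d) × Fin d) ℂ)
            - ((1 : Matrix (Fin d) (Fin d) ℂ) ⊗ₖ (W * W)) ⊗ₖ (1 : Matrix (Fin d) (Fin d) ℂ)
          = (((1 : Matrix (Fin d) (Fin d) ℂ)) ⊗ₖ ((1 : Matrix (Fin d) (Fin d) ℂ) - W * W)) ⊗ₖ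
              (1 : Matrix (Fin d) (Fin d) ℂ) by
          rw [kron_sub', sub_kron', one_kronecker_one, one_kronecker_one]]
      exact psd_kron' (psd_kron' Matrix.PosSemidef.one hW2) Matrix.PosSemidef.one
    · rw [hAA, hYdef,
        show ((1 : Matrix (Fin d) (Fin d) ℂ) ⊗ₖ (W * W)) ⊗ₖ (1 : Matrix (Fin d) (Fin d) ℂ)
            - ((W * W) ⊗ₖ (W * W)) ⊗ₖ (1 : Matrix (Fin d) (Fin d) ℂ)
          = (((1 : Matrix (Fin d) (Fin d) ℂ) - W * W) ⊗ₖ (W * W)) ⊗ₖ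
              (1 : Matrix (Fin d) (Fin d) ℂ) by
          rw [sub_kron', sub_kron']]
      exact psd_kron' (psd_kron' hW2 hWW_psd) Matrix.PosSemidef.one
  -- the commutator-like operator C
  set C : Matrix ((Fin d × Fin d) × Fin d) ((Fin d × Fin d) × Fin d) ℂ :=
    ((1 : Matrix (Fin d) (Fin d) ℂ) ⊗ₖ W) ⊗ₖ (1 : Matrix (Fin d) (Fin d) ℂ)
      - (ε : ℂ) • ((W ⊗ₖ (1 : Matrix (Fin d) (Fin d) ℂ)) ⊗ₖ (1 : Matrix (Fin d) (Fin d) ℂ))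
    with hCdef
  have hCherm : C.IsHermitian := by
    unfold Matrix.IsHermitian
    rw [hCdef, conjTranspose_sub, conjTranspose_smul, kron_conjT', kron_conjT', kron_conjT',
      kron_conjT', hW.eq, conjTranspose_one, Complex.star_def, Complex.conj_ofReal]
  have hCC : C * C = Y + X - ((2 : ℂ) * (ε : ℂ)) • A := by
    rw [hCdef]
    simp only [sub_mul, mul_sub, smul_mul_assoc, mul_smul_comm, smul_smul, hεsq, one_smul,
      ← mul_kronecker_mul, one_mul, mul_one]
    rw [hYdef, hXdef, hAdef]
    match_scalars <;> simp [sq, hεsq] <;> ring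
  have htrRCC : (R * (C * C)).trace = 0 := by
    rw [hCC, mul_sub, mul_add, trace_sub, trace_add, htrRX, htrRY, mul_smul_comm, trace_smul,
      hRA, smul_eq_mul]
    rw [mul_assoc, hεsq]
    norm_num
  -- deduce R * C = 0
  have hSS : hRpos.sqrt * hRpos.sqrt = R := hRpos.sqrt_mul_self
  have htr0 : ((hRpos.sqrt * C)ᴴ * (hRpos.sqrt * C)).trace = 0 := by
    rw [conjTranspose_mul, hCherm.eq, hRpos.posSemidef_sqrt.isHermitian.eq,
      show C * hRpos.sqrt * (hRpos.sqrt * C) = C * R * C by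
        rw [show C * hRpos.sqrt * (hRpos.sqrt * C) = C * (hRpos.sqrt * hRpos.sqrt) * C by
          noncomm_ring, hSS],
      trace_mul_cycle, trace_mul_comm]
    exact htrRCC
  have hSC : hRpos.sqrt * C = 0 := trace_conjT_mul_self_eq_zero' htr0
  have hRC : R * C = 0 := by
    rw [show R * C = hRpos.sqrt * (hRpos.sqrt * C) by rw [← mul_assoc, hSS], hSC, mul_zero]
  -- conclude
  have hkey : R * (((1 : Matrix (Fin d) (Fin d) ℂ) ⊗ₖ W) ⊗ₖ (1 : Matrix (Fin d) (Fin d) ℂ))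
      = (ε : ℂ) • (R * ((W ⊗ₖ (1 : Matrix (Fin d) (Fin d) ℂ)) ⊗ₖ
          (1 : Matrix (Fin d) (Fin d) ℂ))) := by
    have := hRC
    rw [hCdef, mul_sub, mul_smul_comm, sub_eq_zero] at this
    exact this
  rw [trace_ptr1_mul R W W', ← hptr2, trace_ptr2_mul R W W']
  have hd1 : ((1 : Matrix (Fin d) (Fin d) ℂ) ⊗ₖ W) ⊗ₖ W'
      = (((1 : Matrix (Fin d) (Fin d) ℂ) ⊗ₖ W) ⊗ₖ (1 : Matrix (Fin d) (Fin d) ℂ))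
        * (((1 : Matrix (Fin d) (Fin d) ℂ) ⊗ₖ (1 : Matrix (Fin d) (Fin d) ℂ)) ⊗ₖ W') := by
    conv_rhs => rw [← mul_kronecker_mul, ← mul_kronecker_mul]; simp only [mul_one, one_mul]
  have hd2 : (W ⊗ₖ (1 : Matrix (Fin d) (Fin d) ℂ)) ⊗ₖ W'
      = ((W ⊗ₖ (1 : Matrix (Fin d) (Fin d) ℂ)) ⊗ₖ (1 : Matrix (Fin d) (Fin d) ℂ))
        * (((1 : Matrix (Fin d) (Fin d) ℂ) ⊗ₖ (1 : Matrix (Fin d) (Fin d) ℂ)) ⊗ₖ W') := by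
    conv_rhs => rw [← mul_kronecker_mul, ← mul_kronecker_mul]; simp only [mul_one, one_mul]
  rw [hd1, hd2, ← mul_assoc, ← mul_assoc, hkey, smul_mul_assoc, trace_smul, smul_eq_mul]

end BellPaper
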